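/- The integral equation for the signature kernel: for C^1 paths X, Y, the function U(s,t) = k(X|_{[0,s]}, Y|_{[0,t]}) satisfies U(s,t) = 1 + ∫_0^s ∫_0^t U(u,v) (Ẋ_u · Ẏ_v) du dv. -/

import Mathlib

open MeasureTheory intervalIntegral

/-- Iterated-integral signature coefficient of a path `X : ℝ → (Fin d → ℝ)` over `[a, b]`. -/
noncomputable def sig {d : ℕ} (X : ℝ → Fin d → ℝ) : List (Fin d) → ℝ → ℝ → ℝ
  | [], _, _ => 1
  | a :: w, s, t => ∫ u in s..t, deriv (fun r => X r a) u * sig X w u t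

lemma sig_nil {d : ℕ} (X : ℝ → Fin d → ℝ) (s t : ℝ) : sig X [] s t = 1 := rfl

lemma sig_cons {d : ℕ} (X : ℝ → Fin d → ℝ) (a : Fin d) (w : List (Fin d)) (s t : ℝ) :
    sig X (a :: w) s t = ∫ u in s..t, deriv (fun r => X r a) u * sig X w u t := rfl

lemma sig_cont {d : ℕ} {X : ℝ → Fin d → ℝ} (hX : ∀ a, Continuous (deriv fun r => X r a)) :
    ∀ w : List (Fin d), Continuous (fun p : ℝ × ℝ => sig X w p.1 p.2) := by
  intro w
  induction w with
  | nil => simpa [sig_nil] using continuous_const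
  | cons a w ih =>
    have hg : Continuous (fun q : ℝ × ℝ => deriv (fun r => X r a) q.1 * sig X w q.1 q.2) :=
      ((hX a).comp continuous_fst).mul ih
    have hI : ∀ (s t c : ℝ), IntervalIntegrable
        (fun u => deriv (fun r => X r a) u * sig X w u c) volume s t := by
      intro s t c
      exact (hg.comp (continuous_id.prodMk continuous_const)).intervalIntegrable s t
    have key : ∀ p : ℝ × ℝ, sig X (a :: w) p.1 p.2 =
        (∫ u in (0:ℝ)..p.2, deriv (fun r => X r a) u * sig X w u p.2)
          - ∫ u in (0:ℝ)..p.1, deriv (fun r => X r a) u * sig X w u p.2 := by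
      intro p
      rw [sig_cons, ← intervalIntegral.integral_add_adjacent_intervals (b := (0:ℝ))
        (hI _ _ _) (hI _ _ _), intervalIntegral.integral_symm]
      ring
    have h1 : Continuous (fun p : ℝ × ℝ =>
        ∫ u in (0:ℝ)..p.2, deriv (fun r => X r a) u * sig X w u p.2) := by
      apply intervalIntegral.continuous_parametric_intervalIntegral_of_continuous
        (f := fun (p : ℝ × ℝ) u => deriv (fun r => X r a) u * sig X w u p.2) ?_ continuous_snd
      exact ((hX a).comp continuous_snd).mul
        (ih.comp ((continuous_snd).prodMk (continuous_snd.comp continuous_fst)))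
    have h2 : Continuous (fun p : ℝ × ℝ =>
        ∫ u in (0:ℝ)..p.1, deriv (fun r => X r a) u * sig X w u p.2) := by
      apply intervalIntegral.continuous_parametric_intervalIntegral_of_continuous
        (f := fun (p : ℝ × ℝ) u => deriv (fun r => X r a) u * sig X w u p.2) ?_ continuous_fst
      exact ((hX a).comp continuous_snd).mul
        (ih.comp ((continuous_snd).prodMk (continuous_snd.comp continuous_fst)))
    have : (fun p : ℝ × ℝ => sig X (a :: w) p.1 p.2) = fun p : ℝ × ℝ =>
        (∫ u in (0:ℝ)..p.2, deriv (fun r => X r a) u * sig X w u p.2)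
          - ∫ u in (0:ℝ)..p.1, deriv (fun r => X r a) u * sig X w u p.2 :=
      funext key
    rw [this]
    exact h1.sub h2

open Set in
lemma triangle_swap {F : ℝ → ℝ → ℝ} (hF : Continuous fun p : ℝ × ℝ => F p.1 p.2)
    {s t : ℝ} (hst : s ≤ t) :
    (∫ r in s..t, ∫ u in r..t, F r u) = ∫ u in s..t, ∫ r in s..u, F r u := by
  have hSmeas : MeasurableSet {p : ℝ × ℝ | p.1 < p.2} :=
    (isOpen_lt continuous_fst continuous_snd).measurableSet
  set G : ℝ × ℝ → ℝ := Set.indicator {p : ℝ × ℝ | p.1 < p.2} (fun p => F p.1 p.2) with hGdef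
  have hFi : IntegrableOn (fun p : ℝ × ℝ => F p.1 p.2) (Ioc s t ×ˢ Ioc s t) :=
    (hF.continuousOn.integrableOn_compact (isCompact_Icc.prod isCompact_Icc)).mono_set
      (Set.prod_mono Ioc_subset_Icc_self Ioc_subset_Icc_self)
  have hGint : Integrable G ((volume.restrict (Ioc s t)).prod (volume.restrict (Ioc s t))) := by
    rw [Measure.prod_restrict, ← Measure.volume_eq_prod ℝ ℝ]
    exact hFi.indicator hSmeas
  have step1 : (∫ r in s..t, ∫ u in r..t, F r u)
      = ∫ r in Ioc s t, ∫ u in Ioc s t, G (r, u) := by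
    rw [intervalIntegral.integral_of_le hst]
    refine setIntegral_congr_fun measurableSet_Ioc (fun r hr => ?_)
    have : (fun u => G (r, u)) = (Ioi r).indicator (fun u => F r u) := by
      funext u; by_cases h : r < u <;> simp [hGdef, Set.indicator, h]
    rw [this, setIntegral_indicator measurableSet_Ioi, Set.Ioc_inter_Ioi,
      max_eq_right hr.1.le, intervalIntegral.integral_of_le hr.2]
  have step2 : (∫ r in Ioc s t, ∫ u in Ioc s t, G (r, u))
      = ∫ u in Ioc s t, ∫ r in Ioc s t, G (r, u) :=
    MeasureTheory.integral_integral_swap (f := fun r u => G (r, u)) hGint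
  have step3 : (∫ u in Ioc s t, ∫ r in Ioc s t, G (r, u))
      = ∫ u in s..t, ∫ r in s..u, F r u := by
    rw [intervalIntegral.integral_of_le hst]
    refine setIntegral_congr_fun measurableSet_Ioc (fun u hu => ?_)
    have : (fun r => G (r, u)) = (Iio u).indicator (fun r => F r u) := by
      funext r; by_cases h : r < u <;> simp [hGdef, Set.indicator, h]
    have hset : Ioc s t ∩ Iio u = Ioo s u := by
      ext r
      constructor
      · rintro ⟨⟨h1, _⟩, h3⟩; exact ⟨h1, h3⟩
      · rintro ⟨h1, h2⟩; exact ⟨⟨h1, (le_of_lt h2).trans hu.2⟩, h2⟩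
    rw [this, setIntegral_indicator measurableSet_Iio, hset,
      intervalIntegral.integral_of_le hu.1.le, integral_Ioc_eq_integral_Ioo]
  rw [step1, step2, step3]

lemma sig_snoc {d : ℕ} {X : ℝ → Fin d → ℝ} (hX : ∀ a, Continuous (deriv fun r => X r a))
    (w : List (Fin d)) (a : Fin d) :
    ∀ s t : ℝ, s ≤ t →
      sig X (w ++ [a]) s t = ∫ u in s..t, deriv (fun r => X r a) u * sig X w s u := by
  induction w with
  | nil =>
    intro s t _
    simp [sig_cons, sig_nil]
  | cons b w ih =>
    intro s t hst
    have hcont : ∀ (v : List (Fin d)) (c : ℝ), Continuous fun u => sig X v u c :=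
      fun v c => (sig_cont hX v).comp (continuous_id.prodMk continuous_const)
    have hcont' : ∀ (v : List (Fin d)) (c : ℝ), Continuous fun u => sig X v c u :=
      fun v c => (sig_cont hX v).comp (continuous_const.prodMk continuous_id)
    have step1 : sig X ((b :: w) ++ [a]) s t
        = ∫ r in s..t, deriv (fun r' => X r' b) r *
            ∫ u in r..t, deriv (fun r' => X r' a) u * sig X w r u := by
      rw [show (b :: w) ++ [a] = b :: (w ++ [a]) from rfl, sig_cons]
      refine intervalIntegral.integral_congr (fun r hr => ?_)
      rw [Set.uIcc_of_le hst] at hr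
      rw [ih r t hr.2]
    have step2 : (∫ r in s..t, deriv (fun r' => X r' b) r *
            ∫ u in r..t, deriv (fun r' => X r' a) u * sig X w r u)
        = ∫ r in s..t, ∫ u in r..t,
            deriv (fun r' => X r' b) r * (deriv (fun r' => X r' a) u * sig X w r u) := by
      refine intervalIntegral.integral_congr (fun r _ => ?_)
      rw [← intervalIntegral.integral_const_mul]
    have hFcont : Continuous (fun p : ℝ × ℝ =>
        deriv (fun r' => X r' b) p.1 * (deriv (fun r' => X r' a) p.2 * sig X w p.1 p.2)) :=
      ((hX b).comp continuous_fst).mul (((hX a).comp continuous_snd).mul (sig_cont hX w))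
    have step3 := triangle_swap (F := fun r u =>
        deriv (fun r' => X r' b) r * (deriv (fun r' => X r' a) u * sig X w r u)) hFcont hst
    have step4 : (∫ u in s..t, ∫ r in s..u,
            deriv (fun r' => X r' b) r * (deriv (fun r' => X r' a) u * sig X w r u))
        = ∫ u in s..t, deriv (fun r' => X r' a) u * sig X (b :: w) s u := by
      refine intervalIntegral.integral_congr (fun u _ => ?_)
      rw [sig_cons, ← intervalIntegral.integral_const_mul]
      refine intervalIntegral.integral_congr (fun r _ => ?_)
      ring
    rw [step1, step2, step3, step4]

lemma sig_bound {d : ℕ} {X : ℝ → Fin d → ℝ} (hX : ∀ a, Continuous (deriv fun r => X r a))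
    {T M : ℝ} (hM : ∀ a, ∀ r ∈ Set.Icc (0:ℝ) T, |deriv (fun r => X r a) r| ≤ M) :
    ∀ (w : List (Fin d)) (s t : ℝ), 0 ≤ s → s ≤ t → t ≤ T →
      |sig X w s t| ≤ (M * (t - s)) ^ w.length / (w.length).factorial := by
  intro w
  induction w with
  | nil => intro s t _ _ _; simp [sig_nil]
  | cons a w ih =>
    intro s t hs0 hst htT
    have hM0 : 0 ≤ M := le_trans (abs_nonneg _) (hM a s ⟨hs0, hst.trans htT⟩)
    have hb : ∀ u ∈ Set.Ioc s t,
        |deriv (fun r => X r a) u * sig X w u t| ≤ M * ((M * (t - u)) ^ w.length / (w.length).factorial) := by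
      intro u hu
      rw [abs_mul]
      exact mul_le_mul (hM a u ⟨hs0.trans hu.1.le, hu.2.trans htT⟩)
        (ih u t (hs0.trans hu.1.le) hu.2 htT) (abs_nonneg _)
        (le_trans (abs_nonneg _) (hM a s ⟨hs0, hst.trans htT⟩))
    have hgint : IntervalIntegrable
        (fun u => M * ((M * (t - u)) ^ w.length / (w.length).factorial)) volume s t := by
      apply Continuous.intervalIntegrable; fun_prop
    have key : ‖∫ u in s..t, deriv (fun r => X r a) u * sig X w u t‖
        ≤ |∫ u in s..t, M * ((M * (t - u)) ^ w.length / (w.length).factorial)| := by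
      apply intervalIntegral.norm_integral_le_abs_of_norm_le _ hgint
      rw [Set.uIoc_of_le hst]
      exact (ae_restrict_iff' measurableSet_Ioc).2 (Filter.Eventually.of_forall hb)
    have hval : (∫ u in s..t, M * ((M * (t - u)) ^ w.length / (w.length).factorial))
        = (M * (t - s)) ^ (w.length + 1) / (w.length + 1).factorial := by
      have h1 : (∫ u in s..t, ((t - u)) ^ w.length)
          = (t - s) ^ (w.length + 1) / (w.length + 1) := by
        rw [intervalIntegral.integral_comp_sub_left (fun v => v ^ w.length) t]
        simp [integral_pow]
      have : (fun u => M * ((M * (t - u)) ^ w.length / (w.length).factorial))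
          = fun u => (M * M ^ w.length / (w.length).factorial) * (t - u) ^ w.length := by
        funext u; rw [mul_pow]; ring
      have hfac : ((w.length).factorial : ℝ) ≠ 0 := Nat.cast_ne_zero.2 (Nat.factorial_ne_zero _)
      have hlen : ((w.length : ℝ) + 1) ≠ 0 := by positivity
      rw [this, intervalIntegral.integral_const_mul, h1, mul_pow, pow_succ, pow_succ,
        Nat.factorial_succ]
      push_cast
      field_simp
    calc |sig X (a :: w) s t|
        ≤ |∫ u in s..t, M * ((M * (t - u)) ^ w.length / (w.length).factorial)| := by
          rw [sig_cons, ← Real.norm_eq_abs]; exact key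
      _ = (M * (t - s)) ^ (w.length + 1) / (w.length + 1).factorial := by
          rw [hval, abs_of_nonneg]
          exact div_nonneg (pow_nonneg (mul_nonneg hM0 (sub_nonneg.2 hst)) _) (by positivity)
      _ = (M * (t - s)) ^ (a :: w).length / ((a :: w).length).factorial := by simp

lemma summable_words {d : ℕ} {c : ℝ} (hc : 0 ≤ c) :
    Summable (fun w : List (Fin d) => c ^ w.length / (w.length).factorial) := by
  apply ((List.equivSigmaTuple (α := Fin d)).symm.summable_iff).mp
  have hnn : ∀ x : Σ n, Fin n → Fin d,
      0 ≤ (fun x : Σ n, Fin n → Fin d => c ^ x.1 / (x.1).factorial) x := by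
    rintro ⟨n, v⟩; positivity
  have H : Summable (fun x : Σ n, Fin n → Fin d => c ^ x.1 / (x.1).factorial) := by
    apply (summable_sigma_of_nonneg hnn).mpr
    constructor
    · intro n; exact .of_finite
    · have : (fun n : ℕ => ∑' _ : Fin n → Fin d, c ^ n / (n).factorial)
          = fun n : ℕ => ((d : ℝ) * c) ^ n / (n).factorial := by
        funext n
        rw [tsum_fintype, Finset.sum_const, Finset.card_univ, Fintype.card_fun]
        simp [nsmul_eq_mul, mul_pow]
        ring
      rw [this]
      exact Real.summable_pow_div_factorial _
  refine H.congr ?_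
  rintro ⟨n, v⟩
  simp [List.equivSigmaTuple]

lemma snoc_ne_nil {d : ℕ} (p : Fin d × List (Fin d)) :
    p.2 ++ [p.1] ∈ ({([] : List (Fin d))}ᶜ : Set (List (Fin d))) := by simp

noncomputable def snocEquiv (d : ℕ) :
    Fin d × List (Fin d) ≃ ({([] : List (Fin d))}ᶜ : Set (List (Fin d))) :=
  Equiv.ofBijective (fun p => ⟨p.2 ++ [p.1], snoc_ne_nil p⟩) (by
    constructor
    · rintro ⟨a₁, w₁⟩ ⟨a₂, w₂⟩ h
      simp only [Subtype.mk.injEq] at h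
      have := congrArg List.reverse h
      simp only [List.reverse_append, List.reverse_cons, List.reverse_nil, List.nil_append,
        List.cons_append, List.cons.injEq, List.reverse_inj] at this
      simp only [Prod.mk.injEq]
      exact ⟨this.1, this.2⟩
    · rintro ⟨w, hw⟩
      rcases w.eq_nil_or_concat with h | ⟨L, b, rfl⟩
      · exact absurd h (by simpa using hw)
      · exact ⟨(b, L), Subtype.ext (by simp)⟩)

lemma tsum_split_snoc {d : ℕ} {F : List (Fin d) → ℝ} (hF : Summable F) :
    ∑' w, F w = F [] + ∑' p : Fin d × List (Fin d), F (p.2 ++ [p.1]) := by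
  rw [← Summable.tsum_add_tsum_compl (s := ({[]} : Set (List (Fin d)))) (hF.subtype _) (hF.subtype _),
    tsum_singleton]
  congr 1
  rw [← Equiv.tsum_eq (snocEquiv d) (fun x => F ↑x)]
  rfl

lemma summable_snd {d : ℕ} {g : List (Fin d) → ℝ} (hg0 : ∀ w, 0 ≤ g w) (hg : Summable g) :
    Summable (fun p : Fin d × List (Fin d) => g p.2) := by
  apply (summable_prod_of_nonneg (fun p => hg0 p.2)).mpr
  exact ⟨fun a => hg, Summable.of_finite⟩

lemma tsum_setIntegral_swap {ι : Type*} [Countable ι] {f : ι → ℝ → ℝ} {c e : ℝ}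
    (hf : ∀ i, Continuous (f i)) {b : ι → ℝ} (hb : Summable b)
    (hbd : ∀ i, ∀ x ∈ Set.Ioc c e, |f i x| ≤ b i) :
    ∑' i, ∫ x in Set.Ioc c e, f i x = ∫ x in Set.Ioc c e, ∑' i, f i x := by
  apply MeasureTheory.integral_tsum_of_summable_integral_norm
  · intro i
    exact (hf i).integrableOn_Ioc
  · apply Summable.of_nonneg_of_le
      (fun i => integral_nonneg (fun x => norm_nonneg _)) ?_
      (hb.mul_left (volume (Set.Ioc c e)).toReal)
    intro i
    calc (∫ x in Set.Ioc c e, ‖f i x‖)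
        ≤ ∫ _ in Set.Ioc c e, b i := by
          apply setIntegral_mono_on ((hf i).norm.integrableOn_Ioc)
            (integrableOn_const measure_Ioc_lt_top.ne) measurableSet_Ioc
          intro x hx
          rw [Real.norm_eq_abs]
          exact hbd i x hx
      _ = (volume (Set.Ioc c e)).toReal * b i := by
          rw [setIntegral_const, smul_eq_mul]
          rfl

lemma exists_deriv_bound {d : ℕ} (f : Fin d → ℝ → ℝ) (hf : ∀ a, Continuous (f a)) (T : ℝ) :
    ∃ M, 0 ≤ M ∧ ∀ a, ∀ r ∈ Set.Icc (0:ℝ) T, |f a r| ≤ M := by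
  have h : ∀ a, ∃ C, ∀ r ∈ Set.Icc (0:ℝ) T, ‖f a r‖ ≤ C := fun a =>
    isCompact_Icc.exists_bound_of_continuousOn (hf a).continuousOn
  choose C hC using h
  refine ⟨∑ a, max 0 (C a), Finset.sum_nonneg (fun a _ => le_max_left _ _), fun a r hr => ?_⟩
  calc |f a r| ≤ C a := hC a r hr
    _ ≤ max 0 (C a) := le_max_right _ _
    _ ≤ ∑ a', max 0 (C a') :=
      Finset.single_le_sum (f := fun a' => max 0 (C a')) (fun a' _ => le_max_left _ _)
        (Finset.mem_univ a)

set_option maxHeartbeats 2000000 in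
/-- Integral equation for the signature kernel: `U(s,t) = k(X|_{[0,s]}, Y|_{[0,t]})` satisfies
`U(s,t) = 1 + ∫₀ˢ∫₀ᵗ U(u,v) (Ẋ_u · Ẏ_v) dv du`. -/
theorem signature_kernel_integral_equation {d : ℕ} (T : ℝ) (hT : 0 ≤ T)
    (X Y : ℝ → Fin d → ℝ)
    (hX : ∀ a : Fin d, ContDiff ℝ 1 (fun t => X t a))
    (hY : ∀ a : Fin d, ContDiff ℝ 1 (fun t => Y t a))
    (s t : ℝ) (hs : s ∈ Set.Icc (0:ℝ) T) (ht : t ∈ Set.Icc (0:ℝ) T) :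
    (∑' w : List (Fin d), sig X w 0 s * sig Y w 0 t)
      = 1 + ∫ u in (0:ℝ)..s, ∫ v in (0:ℝ)..t,
          (∑' w : List (Fin d), sig X w 0 u * sig Y w 0 v)
            * (∑ a : Fin d, deriv (fun r => X r a) u * deriv (fun r => Y r a) v) := by
  have hcX : ∀ a : Fin d, Continuous (deriv fun r => X r a) :=
    fun a => (hX a).continuous_deriv le_rfl
  have hcY : ∀ a : Fin d, Continuous (deriv fun r => Y r a) :=
    fun a => (hY a).continuous_deriv le_rfl
  obtain ⟨Mx, hMx0, hMx⟩ := exists_deriv_bound (fun a => deriv fun r => X r a) hcX T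
  obtain ⟨My, hMy0, hMy⟩ := exists_deriv_bound (fun a => deriv fun r => Y r a) hcY T
  -- continuity of sig in upper variable
  have hcontX : ∀ w : List (Fin d), Continuous fun u => sig X w 0 u :=
    fun w => (sig_cont hcX w).comp (continuous_const.prodMk continuous_id)
  have hcontY : ∀ w : List (Fin d), Continuous fun v => sig Y w 0 v :=
    fun w => (sig_cont hcY w).comp (continuous_const.prodMk continuous_id)
  -- bounds for sig
  have hXb : ∀ (w : List (Fin d)), ∀ u ∈ Set.Icc (0:ℝ) T,
      |sig X w 0 u| ≤ (Mx*T)^w.length / w.length.factorial := by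
    intro w u hu
    calc |sig X w 0 u| ≤ (Mx*(u-0))^w.length / w.length.factorial :=
          sig_bound hcX hMx w 0 u le_rfl hu.1 hu.2
      _ ≤ (Mx*T)^w.length / w.length.factorial := by
          gcongr
          · exact mul_nonneg hMx0 (by linarith [hu.1])
          · linarith [hu.2]
  have hYb : ∀ (w : List (Fin d)), ∀ v ∈ Set.Icc (0:ℝ) T,
      |sig Y w 0 v| ≤ (My*T)^w.length := by
    intro w v hv
    calc |sig Y w 0 v| ≤ (My*(v-0))^w.length / w.length.factorial :=
          sig_bound hcY hMy w 0 v le_rfl hv.1 hv.2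
      _ ≤ (My*T)^w.length / w.length.factorial := by
          gcongr
          · exact mul_nonneg hMy0 (by linarith [hv.1])
          · linarith [hv.2]
      _ ≤ (My*T)^w.length := by
          apply div_le_self (by positivity)
          exact_mod_cast Nat.one_le_iff_ne_zero.mpr (Nat.factorial_ne_zero _)
  -- master summable bound
  have hsum_b0 : Summable (fun w : List (Fin d) =>
      (Mx*T)^w.length * (My*T)^w.length / w.length.factorial) := by
    refine (summable_words (d := d) (c := (Mx*T)*(My*T)) (by positivity)).congr ?_
    intro w; rw [mul_pow]
  have hsum_pb : Summable (fun p : Fin d × List (Fin d) =>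
      (Mx*T)^p.2.length * (My*T)^p.2.length / p.2.length.factorial) :=
    summable_snd (fun w => by positivity) hsum_b0
  -- summability of the kernel series at each point
  have hsumK : ∀ u ∈ Set.Icc (0:ℝ) T, ∀ v ∈ Set.Icc (0:ℝ) T,
      Summable (fun w : List (Fin d) => sig X w 0 u * sig Y w 0 v) := by
    intro u hu v hv
    apply Summable.of_norm_bounded hsum_b0
    intro w
    rw [Real.norm_eq_abs, abs_mul]
    calc |sig X w 0 u| * |sig Y w 0 v|
        ≤ ((Mx*T)^w.length / w.length.factorial) * (My*T)^w.length :=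
          mul_le_mul (hXb w u hu) (hYb w v hv) (abs_nonneg _) (by positivity)
      _ = (Mx*T)^w.length * (My*T)^w.length / w.length.factorial := by ring
  -- pointwise bound on the product terms
  have hterm_bd : ∀ (p : Fin d × List (Fin d)), ∀ u ∈ Set.Icc (0:ℝ) T, ∀ v ∈ Set.Icc (0:ℝ) T,
      |(deriv (fun r => X r p.1) u * sig X p.2 0 u) *
        (deriv (fun r => Y r p.1) v * sig Y p.2 0 v)|
        ≤ (Mx*My) * ((Mx*T)^p.2.length * (My*T)^p.2.length / p.2.length.factorial) := by
    intro p u hu v hv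
    rw [abs_mul, abs_mul, abs_mul]
    calc |deriv (fun r => X r p.1) u| * |sig X p.2 0 u| *
          (|deriv (fun r => Y r p.1) v| * |sig Y p.2 0 v|)
        ≤ (Mx * ((Mx*T)^p.2.length / p.2.length.factorial)) * (My * (My*T)^p.2.length) := by
          apply mul_le_mul
          · exact mul_le_mul (hMx p.1 u hu) (hXb p.2 u hu) (abs_nonneg _) hMx0
          · exact mul_le_mul (hMy p.1 v hv) (hYb p.2 v hv) (abs_nonneg _) hMy0
          · positivity
          · exact mul_nonneg hMx0 (by positivity)
      _ = (Mx*My) * ((Mx*T)^p.2.length * (My*T)^p.2.length / p.2.length.factorial) := by ring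
  -- bound on the inner Y-integral
  have hcYbd : ∀ p : Fin d × List (Fin d),
      |∫ v in (0:ℝ)..t, deriv (fun r => Y r p.1) v * sig Y p.2 0 v|
        ≤ (My * (My*T)^p.2.length) * T := by
    intro p
    have h : ∀ v ∈ Set.uIoc (0:ℝ) t,
        ‖deriv (fun r => Y r p.1) v * sig Y p.2 0 v‖ ≤ My * (My*T)^p.2.length := by
      intro v hv
      rw [Set.uIoc_of_le ht.1] at hv
      have hvT : v ∈ Set.Icc (0:ℝ) T := ⟨hv.1.le, hv.2.trans ht.2⟩
      rw [Real.norm_eq_abs, abs_mul]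
      exact mul_le_mul (hMy p.1 v hvT) (hYb p.2 v hvT) (abs_nonneg _) hMy0
    calc |∫ v in (0:ℝ)..t, deriv (fun r => Y r p.1) v * sig Y p.2 0 v|
        ≤ (My * (My*T)^p.2.length) * |t - 0| := by
          rw [← Real.norm_eq_abs]
          exact intervalIntegral.norm_integral_le_of_norm_le_const h
      _ ≤ (My * (My*T)^p.2.length) * T := by
          rw [sub_zero, abs_of_nonneg ht.1]
          exact mul_le_mul_of_nonneg_left ht.2 (mul_nonneg hMy0 (by positivity))
  -- Step 1: split off the empty word via the snoc decomposition
  have hsplit : (∑' w : List (Fin d), sig X w 0 s * sig Y w 0 t)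
      = 1 + ∑' p : Fin d × List (Fin d),
          sig X (p.2 ++ [p.1]) 0 s * sig Y (p.2 ++ [p.1]) 0 t := by
    rw [tsum_split_snoc (hsumK s hs t ht)]
    simp [sig_nil]
  rw [hsplit]
  congr 1
  calc (∑' p : Fin d × List (Fin d), sig X (p.2 ++ [p.1]) 0 s * sig Y (p.2 ++ [p.1]) 0 t)
      = ∑' p : Fin d × List (Fin d), ∫ u in Set.Ioc (0:ℝ) s,
          (deriv (fun r => X r p.1) u * sig X p.2 0 u) *
            ∫ v in (0:ℝ)..t, deriv (fun r => Y r p.1) v * sig Y p.2 0 v := by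
        refine tsum_congr (fun p => ?_)
        rw [sig_snoc hcX p.2 p.1 0 s hs.1, sig_snoc hcY p.2 p.1 0 t ht.1,
          ← intervalIntegral.integral_mul_const, intervalIntegral.integral_of_le hs.1]
    _ = ∫ u in Set.Ioc (0:ℝ) s, ∑' p : Fin d × List (Fin d),
          (deriv (fun r => X r p.1) u * sig X p.2 0 u) *
            ∫ v in (0:ℝ)..t, deriv (fun r => Y r p.1) v * sig Y p.2 0 v := by
        apply tsum_setIntegral_swap
          (b := fun p : Fin d × List (Fin d) => (Mx*My*T) *
            ((Mx*T)^p.2.length * (My*T)^p.2.length / p.2.length.factorial))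
        · intro p
          exact ((hcX p.1).mul (hcontX p.2)).mul continuous_const
        · exact hsum_pb.mul_left (Mx*My*T)
        · intro p u hu
          have huT : u ∈ Set.Icc (0:ℝ) T := ⟨hu.1.le, hu.2.trans hs.2⟩
          rw [abs_mul]
          have hfX : |deriv (fun r => X r p.1) u * sig X p.2 0 u|
              ≤ Mx * ((Mx*T)^p.2.length / p.2.length.factorial) := by
            rw [abs_mul]
            exact mul_le_mul (hMx p.1 u huT) (hXb p.2 u huT) (abs_nonneg _) hMx0
          calc |deriv (fun r => X r p.1) u * sig X p.2 0 u| *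
                |∫ v in (0:ℝ)..t, deriv (fun r => Y r p.1) v * sig Y p.2 0 v|
              ≤ (Mx * ((Mx*T)^p.2.length / p.2.length.factorial)) *
                  ((My * (My*T)^p.2.length) * T) := by
                apply mul_le_mul hfX (hcYbd p) (abs_nonneg _)
                exact mul_nonneg hMx0 (by positivity)
            _ = (Mx*My*T) *
                  ((Mx*T)^p.2.length * (My*T)^p.2.length / p.2.length.factorial) := by ring
    _ = ∫ u in Set.Ioc (0:ℝ) s, ∫ v in Set.Ioc (0:ℝ) t,
          (∑' w : List (Fin d), sig X w 0 u * sig Y w 0 v) *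
            (∑ a : Fin d, deriv (fun r => X r a) u * deriv (fun r => Y r a) v) := by
        refine setIntegral_congr_fun measurableSet_Ioc (fun u hu => ?_)
        have huT : u ∈ Set.Icc (0:ℝ) T := ⟨hu.1.le, hu.2.trans hs.2⟩
        have h1 : ∀ p : Fin d × List (Fin d),
            (deriv (fun r => X r p.1) u * sig X p.2 0 u) *
              (∫ v in (0:ℝ)..t, deriv (fun r => Y r p.1) v * sig Y p.2 0 v)
            = ∫ v in Set.Ioc (0:ℝ) t,
                (deriv (fun r => X r p.1) u * sig X p.2 0 u) *
                  (deriv (fun r => Y r p.1) v * sig Y p.2 0 v) := by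
          intro p
          rw [← intervalIntegral.integral_const_mul, intervalIntegral.integral_of_le ht.1]
        rw [tsum_congr h1]
        have hswap2 : (∑' p : Fin d × List (Fin d), ∫ v in Set.Ioc (0:ℝ) t,
              (deriv (fun r => X r p.1) u * sig X p.2 0 u) *
                (deriv (fun r => Y r p.1) v * sig Y p.2 0 v))
            = ∫ v in Set.Ioc (0:ℝ) t, ∑' p : Fin d × List (Fin d),
              (deriv (fun r => X r p.1) u * sig X p.2 0 u) *
                (deriv (fun r => Y r p.1) v * sig Y p.2 0 v) := by
          apply tsum_setIntegral_swap
            (b := fun p : Fin d × List (Fin d) => (Mx*My) *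
              ((Mx*T)^p.2.length * (My*T)^p.2.length / p.2.length.factorial))
          · intro p
            exact continuous_const.mul ((hcY p.1).mul (hcontY p.2))
          · exact hsum_pb.mul_left (Mx*My)
          · intro p v hv
            have hvT : v ∈ Set.Icc (0:ℝ) T := ⟨hv.1.le, hv.2.trans ht.2⟩
            exact hterm_bd p u huT v hvT
        rw [hswap2]
        refine setIntegral_congr_fun measurableSet_Ioc (fun v hv => ?_)
        have hvT : v ∈ Set.Icc (0:ℝ) T := ⟨hv.1.le, hv.2.trans ht.2⟩
        have hsum_uv : Summable (fun p : Fin d × List (Fin d) =>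
            (deriv (fun r => X r p.1) u * sig X p.2 0 u) *
              (deriv (fun r => Y r p.1) v * sig Y p.2 0 v)) := by
          apply Summable.of_norm_bounded (hsum_pb.mul_left (Mx*My))
          intro p
          rw [Real.norm_eq_abs]
          exact hterm_bd p u huT v hvT
        rw [Summable.tsum_prod' hsum_uv, tsum_fintype]
        have h2 : ∀ a : Fin d, (∑' w : List (Fin d),
              (deriv (fun r => X r a) u * sig X w 0 u) *
                (deriv (fun r => Y r a) v * sig Y w 0 v))
            = (deriv (fun r => X r a) u * deriv (fun r => Y r a) v) *
                ∑' w : List (Fin d), sig X w 0 u * sig Y w 0 v := by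
          intro a
          rw [← tsum_mul_left]
          exact tsum_congr fun w => by ring
        calc (∑ a : Fin d, ∑' w : List (Fin d),
              (deriv (fun r => X r a) u * sig X w 0 u) *
                (deriv (fun r => Y r a) v * sig Y w 0 v))
            = ∑ a : Fin d, (deriv (fun r => X r a) u * deriv (fun r => Y r a) v) *
                ∑' w : List (Fin d), sig X w 0 u * sig Y w 0 v :=
              Finset.sum_congr rfl (fun a _ => h2 a)
          _ = (∑' w : List (Fin d), sig X w 0 u * sig Y w 0 v) *
                (∑ a : Fin d, deriv (fun r => X r a) u * deriv (fun r => Y r a) v) := by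
              rw [← Finset.sum_mul, mul_comm]
        intro a
        apply Summable.of_norm_bounded (hsum_b0.mul_left (Mx*My))
        intro w
        rw [Real.norm_eq_abs]
        exact hterm_bd (a, w) u huT v hvT
    _ = ∫ u in (0:ℝ)..s, ∫ v in (0:ℝ)..t,
          (∑' w : List (Fin d), sig X w 0 u * sig Y w 0 v) *
            (∑ a : Fin d, deriv (fun r => X r a) u * deriv (fun r => Y r a) v) := by
        rw [intervalIntegral.integral_of_le hs.1]
        refine setIntegral_congr_fun measurableSet_Ioc (fun u _ => ?_)
        rw [intervalIntegral.integral_of_le ht.1]
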